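/- Let a and b be reals with 0 ≤ a < b and let ℓ be a natural number with b − a ≥ 2^{−ℓ}; then ⌊a·2^ℓ⌋ < ⌊b·2^ℓ⌋. Consequently, if n ≥ 2 is an integer and α_0,…,α_m are leaf probabilities with Σ α_i = 1 and α_i ≥ 1/n for every i, then every node power satisfies P_j ≤ ⌊log₂ n⌋ + 1. -/
import Mathlib


/-- The power of a split with boundaries `a < b`: the index of the first bit
in which the binary fractional expansions of `a` and `b` differ. -/
noncomputable def nodePower (a b : ℝ) : ℕ :=
  sInf {ℓ : ℕ | ⌊a * 2 ^ ℓ⌋ < ⌊b * 2 ^ ℓ⌋}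

lemma floor_gap (a b : ℝ) (ℓ : ℕ) (hab : (2 : ℝ) ^ (-(ℓ : ℤ)) ≤ b - a) :
    ⌊a * 2 ^ ℓ⌋ < ⌊b * 2 ^ ℓ⌋ := by
  have h2 : (0:ℝ) < (2:ℝ) ^ ℓ := by positivity
  have hkey : a * 2 ^ ℓ + 1 ≤ b * 2 ^ ℓ := by
    have : (2 : ℝ) ^ (-(ℓ : ℤ)) * 2 ^ ℓ ≤ (b - a) * 2 ^ ℓ :=
      mul_le_mul_of_nonneg_right hab (le_of_lt h2)
    have hpow : (2 : ℝ) ^ (-(ℓ : ℤ)) * 2 ^ ℓ = 1 := by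
      rw [zpow_neg, ← zpow_natCast (2:ℝ) ℓ]
      field_simp
    nlinarith
  calc ⌊a * 2 ^ ℓ⌋ < ⌊a * 2 ^ ℓ⌋ + 1 := by omega
    _ = ⌊a * 2 ^ ℓ + 1⌋ := by rw [Int.floor_add_one]
    _ ≤ ⌊b * 2 ^ ℓ⌋ := Int.floor_le_floor hkey

/-- If `0 ≤ a < b` and `b - a ≥ 2^{-ℓ}`, then `⌊a·2^ℓ⌋ < ⌊b·2^ℓ⌋`.
Consequently, for leaf probabilities `α₀,…,α_m` with `Σ αᵢ = 1` and
`αᵢ ≥ 1/n` for all `i ≤ m` (where `n ≥ 2` is an integer), every node power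
`P_j = nodePower ((Σ_{i<j} αᵢ) - α_{j-1}/2) ((Σ_{i<j} αᵢ) + α_j/2)`
satisfies `P_j ≤ ⌊log₂ n⌋ + 1`. -/
theorem floor_lt_floor_of_gap_and_nodePower_le_log :
    (∀ (a b : ℝ) (ℓ : ℕ), 0 ≤ a → a < b → (2 : ℝ) ^ (-(ℓ : ℤ)) ≤ b - a →
      ⌊a * 2 ^ ℓ⌋ < ⌊b * 2 ^ ℓ⌋) ∧
    (∀ (n m : ℕ), 2 ≤ n → 1 ≤ m → ∀ α : ℕ → ℝ,
      (∑ i ∈ Finset.range (m + 1), α i) = 1 →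
      (∀ i ≤ m, 1 / (n : ℝ) ≤ α i) →
      ∀ j, 1 ≤ j → j ≤ m →
        nodePower ((∑ i ∈ Finset.range j, α i) - α (j - 1) / 2)
                  ((∑ i ∈ Finset.range j, α i) + α j / 2)
          ≤ Nat.log 2 n + 1) := by
  constructor
  · intro a b ℓ _ _ hab
    exact floor_gap a b ℓ hab
  · intro n m hn hm α hsum hα j hj1 hjm
    set ℓ := Nat.log 2 n + 1 with hℓ
    set a := (∑ i ∈ Finset.range j, α i) - α (j - 1) / 2
    set b := (∑ i ∈ Finset.range j, α i) + α j / 2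
    have hn0 : (0:ℝ) < (n:ℝ) := by positivity
    have hαj : 1 / (n : ℝ) ≤ α j := hα j hjm
    have hαj1 : 1 / (n : ℝ) ≤ α (j - 1) := hα (j - 1) (by omega)
    -- n < 2^ℓ
    have hnlt : n < 2 ^ ℓ := Nat.lt_pow_succ_log_self (by norm_num) n
    have hpow : (2 : ℝ) ^ (-(ℓ : ℤ)) ≤ 1 / (n : ℝ) := by
      rw [zpow_neg, zpow_natCast]
      rw [inv_eq_one_div, div_le_div_iff₀ (by positivity) hn0]
      have : (n:ℝ) ≤ (2:ℝ) ^ ℓ := by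
        exact_mod_cast Nat.le_of_lt hnlt
      linarith
    have hgap : (2 : ℝ) ^ (-(ℓ : ℤ)) ≤ b - a := by
      have : b - a = α (j-1) / 2 + α j / 2 := by simp [a, b]; ring
      rw [this]
      have h1 : 1 / (n : ℝ) ≤ α (j-1) / 2 + α j / 2 := by
        have h2n : 1 / (n:ℝ) ≤ 2 / (n:ℝ) := by
          rw [div_le_div_iff₀ hn0 hn0]; nlinarith
        linarith
      linarith
    exact Nat.sInf_le (floor_gap a b ℓ hgap)
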